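/- Let (Ω, μ) be a measure space, let θ > 0, and let ρ, c : Ω → ℝ be measurable with ρ ≥ 0 μ-a.e. Suppose there is a constant C ≥ 0 such that ∫ ρ·(F_ε'(c))² dμ ≤ C for every ε ∈ (0,1). Then |c| < 1 holds μ-almost everywhere on the set {x ∈ Ω : ρ(x) > 0}; i.e. the set {x : ρ(x) > 0 and |c(x)| ≥ 1} is μ-null. -/

import Mathlib

open Real Set Filter MeasureTheory

/-- The Flory–Huggins potential. -/
noncomputable def FH (θ s : ℝ) : ℝ :=
  (θ / 2) * ((1 + s) * Real.log (1 + s) + (1 - s) * Real.log (1 - s))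

/-- Its first derivative on `(-1,1)`. -/
noncomputable def FH' (θ s : ℝ) : ℝ :=
  (θ / 2) * Real.log ((1 + s) / (1 - s))

/-- The regularized (quadratic extension) Flory–Huggins potential `F_ε`.
Note that `F''(±(1-ε)) = θ/(ε(2-ε))`. -/
noncomputable def FHreg (θ ε s : ℝ) : ℝ :=
  if 1 - ε < s then
    FH θ (1 - ε) + FH' θ (1 - ε) * (s - (1 - ε))
      + (1 / 2) * (θ / (ε * (2 - ε))) * (s - (1 - ε)) ^ 2
  else if s < -1 + ε then
    FH θ (-1 + ε) + FH' θ (-1 + ε) * (s - (-1 + ε))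
      + (1 / 2) * (θ / (ε * (2 - ε))) * (s - (-1 + ε)) ^ 2
  else FH θ s

lemma FHreg_deriv_sq_bound (θ : ℝ) (hθ : 0 < θ) {ε : ℝ} (hε : ε ∈ Set.Ioo (0:ℝ) 1)
    {s : ℝ} (hs : 1 ≤ |s|) :
    ((θ/2) * Real.log ((2-ε)/ε))^2 ≤ (deriv (FHreg θ ε) s)^2 := by
  obtain ⟨hε0, hε1⟩ := hε
  set b : ℝ := (θ/2) * Real.log ((2-ε)/ε) with hbdef
  have h2ε : (0:ℝ) < 2 - ε := by linarith
  have hb0 : 0 ≤ b := by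
    have : (1:ℝ) ≤ (2-ε)/ε := (one_le_div hε0).2 (by linarith)
    have := Real.log_nonneg this
    positivity
  have hK : 0 < θ / (ε * (2 - ε)) := by positivity
  rcases le_abs.mp hs with h1 | h1
  · -- s ≥ 1
    have heq : FHreg θ ε =ᶠ[nhds s] (fun t => FH θ (1-ε) + FH' θ (1-ε) * (t - (1-ε))
        + (1/2) * (θ / (ε * (2-ε))) * (t - (1-ε))^2) := by
      filter_upwards [Ioi_mem_nhds (show 1 - ε < s by linarith)] with t ht
      simp only [FHreg, if_pos (mem_Ioi.mp ht)]
    have hq : HasDerivAt (fun t => FH θ (1-ε) + FH' θ (1-ε) * (t - (1-ε))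
        + (1/2) * (θ / (ε * (2-ε))) * (t - (1-ε))^2)
        (FH' θ (1-ε) + (θ / (ε * (2-ε))) * (s - (1-ε))) s := by
      have h0 : HasDerivAt (fun t : ℝ => t - (1-ε)) 1 s := (hasDerivAt_id s).sub_const _
      have h1' := (h0.const_mul (FH' θ (1-ε))).const_add (FH θ (1-ε))
      have h2 := (h0.pow 2).const_mul ((1:ℝ)/2 * (θ / (ε * (2-ε))))
      have := h1'.add h2
      exact this.congr_deriv (by ring)
    have hd : deriv (FHreg θ ε) s = FH' θ (1-ε) + (θ / (ε * (2-ε))) * (s - (1-ε)) := by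
      rw [heq.deriv_eq, hq.deriv]
    have hFH' : FH' θ (1-ε) = b := by
      have e1 : (1:ℝ)+(1-ε) = 2-ε := by ring
      have e2 : (1:ℝ)-(1-ε) = ε := by ring
      simp only [FH', e1, e2, hbdef]
    have hge : b ≤ deriv (FHreg θ ε) s := by
      rw [hd, hFH']
      have : 0 ≤ (θ / (ε * (2-ε))) * (s - (1-ε)) :=
        mul_nonneg hK.le (by linarith)
      linarith
    exact pow_le_pow_left₀ hb0 hge 2
  · -- s ≤ -1
    have hs' : s ≤ -1 := by linarith
    have heq : FHreg θ ε =ᶠ[nhds s] (fun t => FH θ (-1+ε) + FH' θ (-1+ε) * (t - (-1+ε))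
        + (1/2) * (θ / (ε * (2-ε))) * (t - (-1+ε))^2) := by
      filter_upwards [Iio_mem_nhds (show s < -1 + ε by linarith)] with t ht
      have ht' : t < -1 + ε := mem_Iio.mp ht
      have hnot : ¬ (1 - ε < t) := by push_neg; linarith
      simp only [FHreg, if_neg hnot, if_pos ht']
    have hq : HasDerivAt (fun t => FH θ (-1+ε) + FH' θ (-1+ε) * (t - (-1+ε))
        + (1/2) * (θ / (ε * (2-ε))) * (t - (-1+ε))^2)
        (FH' θ (-1+ε) + (θ / (ε * (2-ε))) * (s - (-1+ε))) s := by
      have h0 : HasDerivAt (fun t : ℝ => t - (-1+ε)) 1 s := (hasDerivAt_id s).sub_const _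
      have h1' := (h0.const_mul (FH' θ (-1+ε))).const_add (FH θ (-1+ε))
      have h2 := (h0.pow 2).const_mul ((1:ℝ)/2 * (θ / (ε * (2-ε))))
      have := h1'.add h2
      exact this.congr_deriv (by ring)
    have hd : deriv (FHreg θ ε) s = FH' θ (-1+ε) + (θ / (ε * (2-ε))) * (s - (-1+ε)) := by
      rw [heq.deriv_eq, hq.deriv]
    have hFH' : FH' θ (-1+ε) = -b := by
      simp only [FH', hbdef]
      have h1 : (1 + (-1+ε)) = ε := by ring
      have h2' : (1 - (-1+ε)) = 2 - ε := by ring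
      rw [h1, h2']
      have : Real.log (ε / (2-ε)) = - Real.log ((2-ε)/ε) := by
        rw [← Real.log_inv]
        congr 1
        field_simp
      rw [this]; ring
    have hle : deriv (FHreg θ ε) s ≤ -b := by
      rw [hd, hFH']
      have : (θ / (ε * (2-ε))) * (s - (-1+ε)) ≤ 0 :=
        mul_nonpos_of_nonneg_of_nonpos hK.le (by linarith)
      linarith
    have : b ≤ -(deriv (FHreg θ ε) s) := by linarith
    calc b^2 ≤ (-(deriv (FHreg θ ε) s))^2 := pow_le_pow_left₀ hb0 this 2
      _ = (deriv (FHreg θ ε) s)^2 := by ring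

theorem concentration_physical_range (θ : ℝ) (hθ : 0 < θ)
    {Ω : Type*} [MeasurableSpace Ω] (μ : Measure Ω)
    (ρ c : Ω → ℝ) (hρ : Measurable ρ) (hc : Measurable c)
    (hρ0 : ∀ᵐ x ∂μ, 0 ≤ ρ x) (C : ℝ) (hC : 0 ≤ C)
    (hbound : ∀ ε ∈ Set.Ioo (0 : ℝ) 1,
      ∫⁻ x, ENNReal.ofReal (ρ x * deriv (FHreg θ ε) (c x) ^ 2) ∂μ ≤ ENNReal.ofReal C) :
    μ {x | 0 < ρ x ∧ 1 ≤ |c x|} = 0 := by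
  -- reduce to sets where ρ is bounded below
  set A : ℕ → Set Ω := fun n => {x | 1/(n+1 : ℝ) ≤ ρ x} ∩ {x | 1 ≤ |c x|} with hA
  have hAmeas : ∀ n, MeasurableSet (A n) := fun n =>
    (measurableSet_le measurable_const hρ).inter
      (measurableSet_le measurable_const hc.abs)
  have hsub : {x | 0 < ρ x ∧ 1 ≤ |c x|} ⊆ ⋃ n, A n := by
    intro x hx
    obtain ⟨hx1, hx2⟩ := hx
    obtain ⟨n, hn⟩ := exists_nat_one_div_lt hx1
    exact Set.mem_iUnion.2 ⟨n, ⟨hn.le, hx2⟩⟩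
  have hAnull : ∀ n, μ (A n) = 0 := by
    intro n
    by_contra hA0
    set δ : ℝ := 1/(n+1 : ℝ) with hδdef
    have hδ : 0 < δ := by positivity
    set m : ENNReal := min (μ (A n)) 1 with hm
    have hm0 : m ≠ 0 := by
      simp only [hm, ne_eq, min_eq_iff]
      push_neg
      constructor <;> intro h <;> simp_all
    have hmtop : m ≠ ⊤ := ne_top_of_le_ne_top ENNReal.one_ne_top (min_le_right _ _)
    have hmt : 0 < m.toReal := ENNReal.toReal_pos hm0 hmtop
    set B : ℝ := Real.sqrt (max 0 (C / m.toReal / δ)) with hBdef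
    have hB0 : 0 ≤ B := Real.sqrt_nonneg _
    set ε : ℝ := Real.exp (-(2*B/θ + 1)) with hεdef
    have hε0 : 0 < ε := Real.exp_pos _
    have hε1 : ε < 1 := by
      rw [hεdef, Real.exp_lt_one_iff]
      have : 0 ≤ 2*B/θ := by positivity
      linarith
    set b : ℝ := (θ/2) * Real.log ((2-ε)/ε) with hbdef
    have hbB : B < b := by
      have hlogε : Real.log ε = -(2*B/θ + 1) := Real.log_exp _
      have h2ε : (1:ℝ) ≤ 2 - ε := by linarith
      have hlog : Real.log ((2-ε)/ε) = Real.log (2-ε) - Real.log ε :=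
        Real.log_div (by linarith) hε0.ne'
      have hlog2 : 0 ≤ Real.log (2-ε) := Real.log_nonneg h2ε
      have : 2*B/θ + 1 ≤ Real.log ((2-ε)/ε) := by
        rw [hlog, hlogε]; linarith
      have hθ2 : 0 < θ/2 := by linarith
      calc B = (θ/2) * (2*B/θ) := by field_simp
        _ < (θ/2) * (2*B/θ + 1) := by nlinarith
        _ ≤ b := by rw [hbdef]; nlinarith
    have hb0 : 0 ≤ b := le_trans hB0 hbB.le
    have hδb : C / m.toReal < δ * b^2 := by
      have hB2 : B^2 = max 0 (C / m.toReal / δ) := Real.sq_sqrt (le_max_left _ _)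
      have h1 : C / m.toReal / δ ≤ B^2 := hB2 ▸ le_max_right _ _
      have h2 : B^2 < b^2 := by nlinarith
      calc C / m.toReal ≤ δ * B^2 := by
            rw [div_le_iff₀ hδ] at h1; linarith
        _ < δ * b^2 := by nlinarith
    -- key integral inequality
    have key : ENNReal.ofReal (δ * b^2) * μ (A n) ≤ ENNReal.ofReal C := by
      calc ENNReal.ofReal (δ * b^2) * μ (A n)
          = ∫⁻ x, (A n).indicator (fun _ => ENNReal.ofReal (δ * b^2)) x ∂μ := by
            rw [lintegral_indicator_const (hAmeas n)]
        _ ≤ ∫⁻ x, ENNReal.ofReal (ρ x * deriv (FHreg θ ε) (c x) ^ 2) ∂μ := by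
            apply lintegral_mono
            intro x
            by_cases hx : x ∈ A n
            · rw [Set.indicator_of_mem hx]
              obtain ⟨hx1, hx2⟩ := hx
              apply ENNReal.ofReal_le_ofReal
              have hder := FHreg_deriv_sq_bound θ hθ ⟨hε0, hε1⟩ hx2
              have : b^2 ≤ deriv (FHreg θ ε) (c x) ^ 2 := hder
              have hρx : δ ≤ ρ x := hx1
              nlinarith
            · rw [Set.indicator_of_notMem hx]; exact zero_le
        _ ≤ ENNReal.ofReal C := hbound ε ⟨hε0, hε1⟩
    have key2 : ENNReal.ofReal (δ * b^2) * m ≤ ENNReal.ofReal C :=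
      le_trans (mul_le_mul_right (min_le_left _ _) _) key
    have hfin : ENNReal.ofReal (δ * b^2) * m ≠ ⊤ :=
      ENNReal.mul_ne_top ENNReal.ofReal_ne_top hmtop
    have := ENNReal.toReal_mono ENNReal.ofReal_ne_top key2
    rw [ENNReal.toReal_mul, ENNReal.toReal_ofReal (by nlinarith),
      ENNReal.toReal_ofReal hC] at this
    -- this : δ * b^2 * m.toReal ≤ C
    have : δ * b^2 ≤ C / m.toReal := (le_div_iff₀ hmt).2 this
    linarith
  exact measure_mono_null hsub (measure_iUnion_null hAnull)
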